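/- Let V̂, V ∈ R^{n×d} have orthonormal columns, let R ∈ R^{d×d} be symmetric, and let W = arg min_{W∈O(d)} ‖V̂ − VW‖_F. Then ‖W^T R (V^T V̂ − W)‖_F ≤ 2 ‖R‖ ‖V̂ − VW‖_F² and ‖(V̂^T V − W^T) R (V^T V̂)‖_F ≤ 2 ‖R‖ ‖V̂ − VW‖_F². -/

import Mathlib

open Matrix
open scoped Matrix.Norms.L2Operator

/-- Frobenius norm of a real matrix. -/
noncomputable def frob {m n : Type*} [Fintype m] [Fintype n] (M : Matrix m n ℝ) : ℝ :=
  Real.sqrt (∑ i, ∑ j, (M i j) ^ 2)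

/-- Spectral (ℓ₂ operator) norm of a real matrix. -/
noncomputable def specNorm {m n : Type*} [Fintype m] [Fintype n] [DecidableEq n]
    (M : Matrix m n ℝ) : ℝ :=
  ‖LinearMap.toContinuousLinearMap (Matrix.toEuclideanLin M)‖

section Aux

variable {m n k d : ℕ}

lemma frob_nonneg (A : Matrix (Fin m) (Fin n) ℝ) : 0 ≤ frob A := Real.sqrt_nonneg _

lemma frob_sq (A : Matrix (Fin m) (Fin n) ℝ) : frob A ^ 2 = trace (Aᵀ * A) := by
  rw [frob, Real.sq_sqrt (by positivity)]
  simp only [trace, diag, mul_apply, transpose_apply]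
  rw [Finset.sum_comm]
  simp [pow_two]

lemma frob_transpose (A : Matrix (Fin m) (Fin n) ℝ) : frob Aᵀ = frob A := by
  rw [frob, frob, Finset.sum_comm]
  rfl

lemma specNorm_eq (A : Matrix (Fin m) (Fin n) ℝ) : specNorm A = ‖A‖ := rfl

lemma specNorm_transpose (A : Matrix (Fin m) (Fin n) ℝ) : ‖Aᵀ‖ = ‖A‖ := by
  rw [← Matrix.conjTranspose_eq_transpose_of_trivial]
  exact Matrix.l2_opNorm_conjTranspose A

lemma l2_norm_one_le : ‖(1 : Matrix (Fin n) (Fin n) ℝ)‖ ≤ 1 := by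
  rw [Matrix.l2_opNorm_def]
  have h1 : ((Matrix.toEuclideanLin.trans LinearMap.toContinuousLinearMap)
      (1 : Matrix (Fin n) (Fin n) ℝ)) = ContinuousLinearMap.id ℝ _ := by
    ext x
    simp [Matrix.toEuclideanLin_apply]
  rw [h1]
  exact ContinuousLinearMap.norm_id_le

lemma specNorm_le_one {A : Matrix (Fin m) (Fin n) ℝ} (hA : Aᵀ * A = 1) : ‖A‖ ≤ 1 := by
  have h := Matrix.l2_opNorm_conjTranspose_mul_self A
  rw [Matrix.conjTranspose_eq_transpose_of_trivial, hA] at h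
  nlinarith [l2_norm_one_le (n := n), norm_nonneg A]

lemma euc_norm_sq (x : Fin k → ℝ) :
    ‖(EuclideanSpace.equiv (Fin k) ℝ).symm x‖ ^ 2 = ∑ i, x i ^ 2 := by
  rw [EuclideanSpace.norm_eq, Real.sq_sqrt (by positivity)]
  simp [sq_abs]

lemma mulVec_l2 (A : Matrix (Fin m) (Fin n) ℝ) (x : Fin n → ℝ) :
    ∑ i, (A *ᵥ x) i ^ 2 ≤ ‖A‖ ^ 2 * ∑ j, x j ^ 2 := by
  have h := Matrix.l2_opNorm_mulVec A ((EuclideanSpace.equiv (Fin n) ℝ).symm x)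
  have h2 := pow_le_pow_left₀ (norm_nonneg _) h 2
  rw [mul_pow, euc_norm_sq, euc_norm_sq] at h2
  exact h2

lemma frob_mul_le (A : Matrix (Fin m) (Fin n) ℝ) (B : Matrix (Fin n) (Fin k) ℝ) :
    frob (A * B) ≤ ‖A‖ * frob B := by
  have hsq : frob (A * B) ^ 2 ≤ (‖A‖ * frob B) ^ 2 := by
    rw [mul_pow]
    have h1 : frob (A * B) ^ 2 = ∑ j, ∑ i, ((A * B) i j) ^ 2 := by
      rw [frob, Real.sq_sqrt (by positivity), Finset.sum_comm]
    have h2 : frob B ^ 2 = ∑ j, ∑ i, (B i j) ^ 2 := by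
      rw [frob, Real.sq_sqrt (by positivity), Finset.sum_comm]
    rw [h1, h2, Finset.mul_sum]
    apply Finset.sum_le_sum
    intro j _
    have := mulVec_l2 A (fun l => B l j)
    simpa [mulVec, dotProduct, mul_apply] using this
  have h3 := Real.sqrt_le_sqrt hsq
  rwa [Real.sqrt_sq (frob_nonneg _),
    Real.sqrt_sq (mul_nonneg (norm_nonneg _) (frob_nonneg _))] at h3

lemma frob_mul_le' (A : Matrix (Fin m) (Fin n) ℝ) (B : Matrix (Fin n) (Fin k) ℝ) :
    frob (A * B) ≤ frob A * ‖B‖ := by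
  rw [← frob_transpose (A * B), transpose_mul]
  calc frob (Bᵀ * Aᵀ) ≤ ‖Bᵀ‖ * frob Aᵀ := frob_mul_le _ _
    _ = frob A * ‖B‖ := by rw [specNorm_transpose, frob_transpose]; ring

lemma transpose_E (i j : Fin d) :
    (single i j (1:ℝ))ᵀ = single j i 1 := by
  ext a b
  simp [Matrix.single, and_comm]

lemma trace_stdBasis_mul (i j : Fin d) (M : Matrix (Fin d) (Fin d) ℝ) :
    trace (single i j 1 * M) = M j i := by
  rw [trace, Finset.sum_eq_single i]
  · simp
  · intro b _ hb
    simpa using Matrix.single_mul_apply_of_ne 1 i j b b hb M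
  · simp

lemma symm_of_traceCond (M : Matrix (Fin d) (Fin d) ℝ)
    (hT : ∀ Q : Matrix (Fin d) (Fin d) ℝ, Qᵀ * Q = 1 → trace (Qᵀ * M) ≤ trace M) :
    M.IsSymm := by
  rw [Matrix.IsSymm]
  ext i j
  rw [transpose_apply]
  rcases eq_or_ne i j with rfl | hij
  · rfl
  set a : ℝ := M i i + M j j with ha
  set b : ℝ := M j i - M i j with hb
  have key : b = 0 → M j i = M i j := by intro h; rw [hb] at h; linarith
  set r : ℝ := Real.sqrt (a ^ 2 + b ^ 2) with hr
  rcases eq_or_ne r 0 with hr0 | hr0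
  · apply key
    have h0 : a ^ 2 + b ^ 2 ≤ 0 := Real.sqrt_eq_zero'.mp hr0
    nlinarith
  · have hrpos : 0 < r := lt_of_le_of_ne (Real.sqrt_nonneg _) (Ne.symm hr0)
    have hrsq : r ^ 2 = a ^ 2 + b ^ 2 := Real.sq_sqrt (by positivity)
    set c : ℝ := a / r with hc
    set s : ℝ := b / r with hs
    have hcs : c ^ 2 + s ^ 2 = 1 := by
      rw [hc, hs, div_pow, div_pow, ← add_div, ← hrsq]
      field_simp
    set E : Fin d → Fin d → Matrix (Fin d) (Fin d) ℝ := fun p q => single p q 1 with hE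
    set P : Matrix (Fin d) (Fin d) ℝ := E i i + E j j with hP
    set S : Matrix (Fin d) (Fin d) ℝ := E j i - E i j with hS
    have hPP : P * P = P := by
      simp only [hP, hE, add_mul, mul_add, Matrix.single_mul_single_same,
        Matrix.single_mul_single_of_ne _ _ _ _ hij, Matrix.single_mul_single_of_ne _ _ _ _ hij.symm,
        mul_one]
      abel
    have hPS : P * S = S := by
      simp only [hP, hS, hE, add_mul, mul_sub, Matrix.single_mul_single_same,
        Matrix.single_mul_single_of_ne _ _ _ _ hij, Matrix.single_mul_single_of_ne _ _ _ _ hij.symm,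
        mul_one]
      abel
    have hSP : S * P = S := by
      simp only [hP, hS, hE, sub_mul, mul_add, Matrix.single_mul_single_same,
        Matrix.single_mul_single_of_ne _ _ _ _ hij, Matrix.single_mul_single_of_ne _ _ _ _ hij.symm,
        mul_one]
      abel
    have hSS : S * S = -P := by
      simp only [hP, hS, hE, sub_mul, mul_sub, Matrix.single_mul_single_same,
        Matrix.single_mul_single_of_ne _ _ _ _ hij, Matrix.single_mul_single_of_ne _ _ _ _ hij.symm,
        mul_one]
      abel
    have hPt : Pᵀ = P := by rw [hP, transpose_add, hE]; simp only [transpose_E]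
    have hSt : Sᵀ = -S := by rw [hS, transpose_sub, hE]; simp only [transpose_E]; abel
    set Q : Matrix (Fin d) (Fin d) ℝ := 1 + ((c - 1) • P + s • S) with hQ
    have hQt : Qᵀ = 1 + ((c - 1) • P - s • S) := by
      rw [hQ, transpose_add, transpose_add, transpose_one, transpose_smul, transpose_smul,
        hPt, hSt]
      module
    have hQQ : Qᵀ * Q = 1 := by
      rw [hQt, hQ]
      have expand : (1 + ((c - 1) • P - s • S)) * (1 + ((c - 1) • P + s • S)) =
          1 + ((c-1) • P + s • S) + ((c-1) • P - s • S)
            + ((c-1)*(c-1)) • (P*P) + ((c-1)*s) • (P*S) - (s*(c-1)) • (S*P) - (s*s) • (S*S) := by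
        simp only [mul_add, add_mul, sub_mul, mul_sub, one_mul, mul_one, smul_mul_smul_comm,
          Matrix.smul_mul, Matrix.mul_smul, smul_smul]
        module
      rw [expand, hPP, hPS, hSP, hSS]
      have hz : (c ^ 2 + s ^ 2 - 1 : ℝ) = 0 := by linarith
      have hfin : (1 : Matrix (Fin d) (Fin d) ℝ) + ((c-1) • P + s • S) + ((c-1) • P - s • S)
            + ((c-1)*(c-1)) • (P) + ((c-1)*s) • (S) - (s*(c-1)) • (S) - (s*s) • (-P)
          = 1 + (c ^ 2 + s ^ 2 - 1) • P := by module
      rw [hfin, hz, zero_smul, add_zero]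
    have htr : trace (Qᵀ * M) = trace M + ((c - 1) * a + s * b) := by
      rw [hQt]
      simp only [add_mul, sub_mul, one_mul, Matrix.smul_mul, trace_add, trace_sub, trace_smul,
        hP, hS, hE, Matrix.add_mul, Matrix.sub_mul, trace_stdBasis_mul]
      simp only [smul_eq_mul, ha, hb]
      ring
    have hineq := hT Q hQQ
    rw [htr] at hineq
    have h1 : (c - 1) * a + s * b ≤ 0 := by linarith
    have h2 : c * a + s * b = r := by
      rw [hc, hs]
      field_simp
      linear_combination -hrsq
    have h3 : r ≤ a := by linarith [h2, h1]
    have hb2 : b ^ 2 ≤ 0 := by nlinarith [hrsq]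
    apply key
    nlinarith

lemma frob_conj (U X : Matrix (Fin d) (Fin d) ℝ) (hU : Uᵀ * U = 1) :
    frob (U * X * Uᵀ) = frob X := by
  have hsq : frob (U * X * Uᵀ) ^ 2 = frob X ^ 2 := by
    rw [frob_sq, frob_sq]
    have : (U * X * Uᵀ)ᵀ * (U * X * Uᵀ) = U * (Xᵀ * X) * Uᵀ := by
      have e1 : (U * X * Uᵀ)ᵀ = U * Xᵀ * Uᵀ := by
        rw [transpose_mul, transpose_mul, transpose_transpose]; noncomm_ring
      rw [e1]
      calc U * Xᵀ * Uᵀ * (U * X * Uᵀ) = U * Xᵀ * (Uᵀ * U) * X * Uᵀ := by noncomm_ring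
        _ = U * (Xᵀ * X) * Uᵀ := by rw [hU, mul_one]; noncomm_ring
    rw [this, trace_mul_comm, ← mul_assoc, ← mul_assoc, hU, one_mul]
  have := congrArg Real.sqrt hsq
  rwa [Real.sqrt_sq (frob_nonneg _), Real.sqrt_sq (frob_nonneg _)] at this

lemma frob_diagonal (w : Fin d → ℝ) : frob (diagonal w) = Real.sqrt (∑ i, w i ^ 2) := by
  rw [frob]
  congr 1
  rw [Finset.sum_congr rfl]
  intro i _
  rw [Finset.sum_eq_single i]
  · simp
  · intro b _ hb; simp [diagonal_apply_ne' _ hb]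
  · simp

lemma herm_key (M : Matrix (Fin d) (Fin d) ℝ) (hMs : M.IsSymm)
    (hT : ∀ Q : Matrix (Fin d) (Fin d) ℝ, Qᵀ * Q = 1 → trace (Qᵀ * M) ≤ trace M)
    (hnorm : ‖M‖ ≤ 1) :
    frob (M - 1) ≤ (d : ℝ) - trace M := by
  have hM : M.IsHermitian := by
    rw [Matrix.IsHermitian, Matrix.conjTranspose_eq_transpose_of_trivial]; exact hMs
  set U : Matrix (Fin d) (Fin d) ℝ := (hM.eigenvectorUnitary : Matrix (Fin d) (Fin d) ℝ) with hUdef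
  set lam : Fin d → ℝ := hM.eigenvalues with hlam
  have hstar : star U = Uᵀ := by
    rw [Matrix.star_eq_conjTranspose, Matrix.conjTranspose_eq_transpose_of_trivial]
  have hU1 : Uᵀ * U = 1 := by
    rw [← hstar]; exact (Matrix.mem_unitaryGroup_iff').mp hM.eigenvectorUnitary.2
  have hU2 : U * Uᵀ = 1 := by
    rw [← hstar]; exact (Matrix.mem_unitaryGroup_iff).mp hM.eigenvectorUnitary.2
  have hspec : M = U * diagonal lam * Uᵀ := by
    have := hM.spectral_theorem
    rwa [Unitary.conjStarAlgAut_apply, hstar, RCLike.ofReal_real_eq_id, Function.id_comp] at this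
  have htrace : trace M = ∑ i, lam i := by
    rw [hspec, trace_mul_comm, ← mul_assoc, hU1, one_mul, trace_diagonal]
  have hsq1 : ∀ i, lam i ^ 2 ≤ 1 := by
    intro i
    have hv := hM.mulVec_eigenvectorBasis i
    have hn : ∑ k, (hM.eigenvectorBasis i) k ^ 2 = 1 := by
      have h1 : ‖hM.eigenvectorBasis i‖ = 1 := hM.eigenvectorBasis.orthonormal.1 i
      have h2 : ‖hM.eigenvectorBasis i‖ ^ 2 = ∑ k, ((hM.eigenvectorBasis i) k) ^ 2 := by
        rw [EuclideanSpace.norm_eq, Real.sq_sqrt (by positivity)]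
        simp [sq_abs]
      rw [← h2, h1, one_pow]
    have hv' : (M *ᵥ (hM.eigenvectorBasis i : Fin d → ℝ))
        = lam i • (hM.eigenvectorBasis i : Fin d → ℝ) := hv
    have h3 := mulVec_l2 M (hM.eigenvectorBasis i)
    rw [hv', hn, mul_one] at h3
    have h4 : ∑ k, (lam i • (hM.eigenvectorBasis i : Fin d → ℝ)) k ^ 2 = lam i ^ 2 := by
      simp only [Pi.smul_apply, PiLp.smul_apply, smul_eq_mul, mul_pow, ← Finset.mul_sum, hn,
        mul_one]
    rw [h4] at h3
    nlinarith [norm_nonneg M]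
  have hpos : ∀ i, 0 ≤ lam i := by
    set eps : Fin d → ℝ := fun i => if lam i < 0 then -1 else 1 with heps
    have heps2 : ∀ i, eps i * eps i = 1 := by
      intro i; by_cases h : lam i < 0 <;> simp [heps, h]
    have hepsl : ∀ i, eps i * lam i = |lam i| := by
      intro i
      by_cases h : lam i < 0
      · simp [heps, h, abs_of_neg h]
      · simp [heps, h, abs_of_nonneg (not_lt.mp h)]
    set Q : Matrix (Fin d) (Fin d) ℝ := U * diagonal eps * Uᵀ with hQ
    have hQt : Qᵀ = Q := by
      rw [hQ, transpose_mul, transpose_mul, transpose_transpose, diagonal_transpose, mul_assoc]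
    have hQQ : Qᵀ * Q = 1 := by
      rw [hQt, hQ]
      calc U * diagonal eps * Uᵀ * (U * diagonal eps * Uᵀ)
          = U * diagonal eps * (Uᵀ * U) * diagonal eps * Uᵀ := by noncomm_ring
        _ = U * (diagonal eps * diagonal eps) * Uᵀ := by rw [hU1]; noncomm_ring
        _ = U * Uᵀ := by rw [diagonal_mul_diagonal]; simp [heps2]
        _ = 1 := hU2
    have htr : trace (Qᵀ * M) = ∑ i, |lam i| := by
      rw [hQt, hQ, hspec]
      calc trace (U * diagonal eps * Uᵀ * (U * diagonal lam * Uᵀ))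
          = trace (U * (diagonal eps * (Uᵀ * U) * diagonal lam) * Uᵀ) := by
            rw [show U * diagonal eps * Uᵀ * (U * diagonal lam * Uᵀ)
              = U * (diagonal eps * (Uᵀ * U) * diagonal lam) * Uᵀ from by noncomm_ring]
        _ = trace (U * ((diagonal eps * diagonal lam) * Uᵀ)) := by
            rw [hU1, mul_one, mul_assoc]
        _ = trace ((diagonal eps * diagonal lam) * (Uᵀ * U)) := by
            rw [trace_mul_comm, mul_assoc]
        _ = ∑ i, |lam i| := by
            rw [hU1, mul_one, diagonal_mul_diagonal, trace_diagonal]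
            exact Finset.sum_congr rfl fun i _ => hepsl i
    have hle := hT Q hQQ
    rw [htr, htrace] at hle
    have hall : ∀ i ∈ Finset.univ, lam i = |lam i| := by
      rw [← Finset.sum_eq_sum_iff_of_le (fun i _ => le_abs_self (lam i))]
      exact le_antisymm (Finset.sum_le_sum fun i _ => le_abs_self (lam i)) hle
    intro i
    rw [hall i (Finset.mem_univ i)]
    exact abs_nonneg _
  have hle1 : ∀ i, lam i ≤ 1 := fun i => by nlinarith [hsq1 i, hpos i]
  have hM1 : M - 1 = U * (diagonal lam - 1) * Uᵀ := by
    rw [mul_sub, sub_mul, ← hspec, mul_one, hU2]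
  rw [hM1, frob_conj _ _ hU1]
  have : diagonal lam - 1 = diagonal (fun i => lam i - 1) := by
    rw [← diagonal_one, diagonal_sub]
  rw [this, frob_diagonal, htrace]
  have h5 : ∀ i, (lam i - 1) ^ 2 = (1 - lam i) ^ 2 := fun i => by ring
  calc Real.sqrt (∑ i, (lam i - 1) ^ 2) = Real.sqrt (∑ i, (1 - lam i) ^ 2) := by
        rw [Finset.sum_congr rfl fun i _ => h5 i]
    _ ≤ Real.sqrt ((∑ i, (1 - lam i)) ^ 2) := by
        apply Real.sqrt_le_sqrt
        exact Finset.sum_sq_le_sq_sum_of_nonneg fun i _ => by linarith [hle1 i]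
    _ = ∑ i, (1 - lam i) := Real.sqrt_sq (Finset.sum_nonneg fun i _ => by linarith [hle1 i])
    _ = (d : ℝ) - ∑ i, lam i := by
        rw [Finset.sum_sub_distrib]
        simp

end Aux

/-- for the Procrustes minimizer `W` of `‖V̂ − V W‖_F` over `O(d)` and a
symmetric `R`, one has `‖Wᵀ R (Vᵀ V̂ − W)‖_F ≤ 2 ‖R‖ ‖V̂ − VW‖_F²` and
`‖(V̂ᵀ V − Wᵀ) R (Vᵀ V̂)‖_F ≤ 2 ‖R‖ ‖V̂ − VW‖_F²`. -/
theorem stmt13 {n d : ℕ}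
    (Vh V : Matrix (Fin n) (Fin d) ℝ) (hVh : Vhᵀ * Vh = 1) (hV : Vᵀ * V = 1)
    (R : Matrix (Fin d) (Fin d) ℝ) (hR : R.IsSymm)
    (W : Matrix (Fin d) (Fin d) ℝ) (hW : Wᵀ * W = 1)
    (hmin : ∀ W' : Matrix (Fin d) (Fin d) ℝ, W'ᵀ * W' = 1 →
      frob (Vh - V * W) ≤ frob (Vh - V * W')) :
    frob (Wᵀ * R * (Vᵀ * Vh - W)) ≤ 2 * specNorm R * frob (Vh - V * W) ^ 2 ∧
    frob ((Vhᵀ * V - Wᵀ) * R * (Vᵀ * Vh)) ≤ 2 * specNorm R * frob (Vh - V * W) ^ 2 := by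
  have hWWt : W * Wᵀ = 1 := mul_eq_one_comm.mp hW
  set G : Matrix (Fin d) (Fin d) ℝ := Vᵀ * Vh with hG
  set M : Matrix (Fin d) (Fin d) ℝ := Wᵀ * G with hMdef
  have keyfrob : ∀ W' : Matrix (Fin d) (Fin d) ℝ, W'ᵀ * W' = 1 →
      frob (Vh - V * W') ^ 2 = 2 * (d : ℝ) - 2 * trace (W'ᵀ * G) := by
    intro W' hW'
    rw [frob_sq]
    have expand : (Vh - V * W')ᵀ * (Vh - V * W') =
        Vhᵀ * Vh + W'ᵀ * (Vᵀ * V) * W' - (Gᵀ * W' + W'ᵀ * G) := by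
      simp only [hG, transpose_sub, transpose_mul, transpose_transpose, Matrix.sub_mul,
        Matrix.mul_sub, Matrix.mul_assoc]
      abel
    have hGt : trace (Gᵀ * W') = trace (W'ᵀ * G) := by
      rw [← trace_transpose (Gᵀ * W'), transpose_mul, transpose_transpose]
    rw [expand, hVh, hV, mul_one, hW', trace_sub, trace_add, trace_add, hGt, trace_one]
    simp only [Fintype.card_fin]
    ring
  have hTcond : ∀ Q : Matrix (Fin d) (Fin d) ℝ, Qᵀ * Q = 1 → trace (Qᵀ * M) ≤ trace M := by
    intro Q hQ
    have hWQ : (W * Q)ᵀ * (W * Q) = 1 := by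
      rw [transpose_mul]
      calc Qᵀ * Wᵀ * (W * Q) = Qᵀ * (Wᵀ * W) * Q := by noncomm_ring
        _ = 1 := by rw [hW, mul_one, hQ]
    have h := hmin (W * Q) hWQ
    have hsq := pow_le_pow_left₀ (frob_nonneg _) h 2
    rw [keyfrob W hW, keyfrob (W * Q) hWQ] at hsq
    have htr : trace ((W * Q)ᵀ * G) = trace (Qᵀ * M) := by
      rw [transpose_mul, hMdef,
        show Qᵀ * Wᵀ * G = Qᵀ * (Wᵀ * G) from by rw [mul_assoc]]
    rw [htr] at hsq
    rw [hMdef]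
    linarith
  have hMs : M.IsSymm := symm_of_traceCond M hTcond
  have hMnorm : ‖M‖ ≤ 1 := by
    have h1 : ‖Wᵀ‖ ≤ 1 := specNorm_le_one (by rw [transpose_transpose]; exact hWWt)
    have h2 : ‖Vᵀ‖ ≤ 1 := by rw [specNorm_transpose]; exact specNorm_le_one hV
    have h3 : ‖Vh‖ ≤ 1 := specNorm_le_one hVh
    have h4 : ‖G‖ ≤ 1 := by
      rw [hG]
      calc ‖Vᵀ * Vh‖ ≤ ‖Vᵀ‖ * ‖Vh‖ := Matrix.l2_opNorm_mul _ _
        _ ≤ 1 := by nlinarith [norm_nonneg Vᵀ, norm_nonneg Vh]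
    rw [hMdef]
    calc ‖Wᵀ * G‖ ≤ ‖Wᵀ‖ * ‖G‖ := Matrix.l2_opNorm_mul _ _
      _ ≤ 1 := by nlinarith [norm_nonneg Wᵀ, norm_nonneg G]
  have hkey := herm_key M hMs hTcond hMnorm
  have hEps : frob (Vh - V * W) ^ 2 = 2 * ((d : ℝ) - trace M) := by
    rw [keyfrob W hW, hMdef]; ring
  set e2 : ℝ := frob (Vh - V * W) ^ 2 with he2
  have he2nn : 0 ≤ e2 := by rw [he2]; positivity
  have hd2 : (d : ℝ) - trace M = e2 / 2 := by linarith [hEps]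
  have hGW : G - W = W * (M - 1) := by
    rw [hMdef, mul_sub, mul_one, ← mul_assoc, hWWt, one_mul]
  have hfGW : frob (G - W) ≤ e2 / 2 := by
    rw [hGW]
    calc frob (W * (M - 1)) ≤ ‖W‖ * frob (M - 1) := frob_mul_le _ _
      _ ≤ 1 * (e2 / 2) := by
          apply mul_le_mul (specNorm_le_one hW) (by linarith) (frob_nonneg _) zero_le_one
      _ = e2 / 2 := one_mul _
  have hRnn : 0 ≤ ‖R‖ := norm_nonneg R
  have hG4 : ‖G‖ ≤ 1 := by
    rw [hG]
    calc ‖Vᵀ * Vh‖ ≤ ‖Vᵀ‖ * ‖Vh‖ := Matrix.l2_opNorm_mul _ _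
      _ ≤ 1 := by
          have h2 : ‖Vᵀ‖ ≤ 1 := by rw [specNorm_transpose]; exact specNorm_le_one hV
          nlinarith [norm_nonneg Vᵀ, norm_nonneg Vh, specNorm_le_one hVh]
  constructor
  · have e : Wᵀ * R * (Vᵀ * Vh - W) = (Wᵀ * R) * (G - W) := by rw [hG]
    rw [e, specNorm_eq]
    have hWR : ‖Wᵀ * R‖ ≤ ‖R‖ := by
      calc ‖Wᵀ * R‖ ≤ ‖Wᵀ‖ * ‖R‖ := Matrix.l2_opNorm_mul _ _
        _ ≤ 1 * ‖R‖ := by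
            apply mul_le_mul_of_nonneg_right _ hRnn
            exact specNorm_le_one (by rw [transpose_transpose]; exact hWWt)
        _ = ‖R‖ := one_mul _
    calc frob ((Wᵀ * R) * (G - W)) ≤ ‖Wᵀ * R‖ * frob (G - W) := frob_mul_le _ _
      _ ≤ ‖R‖ * (e2 / 2) := by
          apply mul_le_mul hWR hfGW (frob_nonneg _) hRnn
      _ ≤ 2 * ‖R‖ * e2 := by nlinarith
  · have e : (Vhᵀ * V - Wᵀ) * R * (Vᵀ * Vh) = (G - W)ᵀ * (R * G) := by
      rw [hG, transpose_sub, transpose_mul, transpose_transpose]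
      noncomm_ring
    rw [e, specNorm_eq]
    have hRG : ‖R * G‖ ≤ ‖R‖ := by
      calc ‖R * G‖ ≤ ‖R‖ * ‖G‖ := Matrix.l2_opNorm_mul _ _
        _ ≤ ‖R‖ * 1 := mul_le_mul_of_nonneg_left hG4 hRnn
        _ = ‖R‖ := mul_one _
    calc frob ((G - W)ᵀ * (R * G)) ≤ frob (G - W)ᵀ * ‖R * G‖ := frob_mul_le' _ _
      _ = frob (G - W) * ‖R * G‖ := by rw [frob_transpose]
      _ ≤ (e2 / 2) * ‖R‖ := by
          apply mul_le_mul hfGW hRG (norm_nonneg _) (by linarith)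
      _ ≤ 2 * ‖R‖ * e2 := by nlinarith
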